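/- Let $x, y \in \mathbb{R}^d$ be nonzero with $x, y \ge 0$ entrywise, $x^Ty = 0$, and $\|x\| = \|y\|$. For $t \in [0,1]$ let $A^t \in \mathbb{R}^{d\times 2}$ have columns $x - ty$ and $y - tx$. Then the singular values of $A^t$ are $\|x\|(1+t)$ and $\|x\|(1-t)$, with corresponding left singular vectors $(x-y)/(\sqrt{2}\|x\|)$ and $(x+y)/(\sqrt{2}\|x\|)$ and right singular vectors $(1/\sqrt{2})(1,-1)^T$ and $(1/\sqrt{2})(1,1)^T$. In particular, $\|A^t\|_* = 2\|x\|$ and $\sigma(A^t) = A^0$ for all $t \in [0,1]$, where $\sigma$ is the entrywise ReLU. -/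

import Mathlib

open Matrix BigOperators

noncomputable def frobSq {m n : ℕ} (A : Matrix (Fin m) (Fin n) ℝ) : ℝ :=
  ∑ i, ∑ j, (A i j)^2

noncomputable def singVals {m n : ℕ} (A : Matrix (Fin m) (Fin n) ℝ) : Fin n → ℝ :=
  fun i => Real.sqrt ((Matrix.posSemidef_conjTranspose_mul_self A).isHermitian.eigenvalues i)

noncomputable def nuclearNorm {m n : ℕ} (A : Matrix (Fin m) (Fin n) ℝ) : ℝ :=
  ∑ i, singVals A i

noncomputable def relu : ℝ → ℝ := fun t => max t 0

lemma trace_eq_sum_eigs {n : Type*} [Fintype n] [DecidableEq n] {A : Matrix n n ℝ}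
    (hA : A.IsHermitian) : A.trace = ∑ i, hA.eigenvalues i := by
  simpa using hA.trace_eq_sum_eigenvalues

lemma det_eq_prod_eigs {n : Type*} [Fintype n] [DecidableEq n] {A : Matrix n n ℝ}
    (hA : A.IsHermitian) : A.det = ∏ i, hA.eigenvalues i := by
  simpa using hA.det_eq_prod_eigenvalues

theorem stmt_17 {d : ℕ} (x y : Fin d → ℝ) (hx : x ≠ 0) (hy : y ≠ 0)
    (hx0 : ∀ i, 0 ≤ x i) (hy0 : ∀ i, 0 ≤ y i)
    (hortho : x ⬝ᵥ y = 0) (hnorm : x ⬝ᵥ x = y ⬝ᵥ y)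
    (t : ℝ) (ht0 : 0 ≤ t) (ht1 : t ≤ 1) :
    letI A : Matrix (Fin d) (Fin 2) ℝ :=
      fun i j => if j = 0 then x i - t * y i else y i - t * x i
    letI A0 : Matrix (Fin d) (Fin 2) ℝ := fun i j => if j = 0 then x i else y i
    letI c : ℝ := Real.sqrt (x ⬝ᵥ x)
    letI u1 : Fin d → ℝ := fun i => (x i - y i) / (Real.sqrt 2 * c)
    letI u2 : Fin d → ℝ := fun i => (x i + y i) / (Real.sqrt 2 * c)
    letI v1 : Fin 2 → ℝ := ![1 / Real.sqrt 2, -(1 / Real.sqrt 2)]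
    letI v2 : Fin 2 → ℝ := ![1 / Real.sqrt 2, 1 / Real.sqrt 2]
    A *ᵥ v1 = (c * (1 + t)) • u1 ∧
    Aᵀ *ᵥ u1 = (c * (1 + t)) • v1 ∧
    A *ᵥ v2 = (c * (1 - t)) • u2 ∧
    Aᵀ *ᵥ u2 = (c * (1 - t)) • v2 ∧
    nuclearNorm A = 2 * c ∧
    A.map relu = A0 := by
  set c : ℝ := Real.sqrt (x ⬝ᵥ x) with hc_def
  set A : Matrix (Fin d) (Fin 2) ℝ :=
    fun i j => if j = 0 then x i - t * y i else y i - t * x i with hA_def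
  have hs_pos : (0:ℝ) < x ⬝ᵥ x := by
    refine lt_of_le_of_ne (Finset.sum_nonneg fun i _ => mul_self_nonneg _) ?_
    exact fun h => hx (dotProduct_self_eq_zero.mp h.symm)
  have hc_pos : 0 < c := Real.sqrt_pos.mpr hs_pos
  have hc2 : c * c = x ⬝ᵥ x := Real.mul_self_sqrt hs_pos.le
  have hc_ne : c ≠ 0 := ne_of_gt hc_pos
  have hs2 : (0:ℝ) < Real.sqrt 2 := by positivity
  have hs2_ne : Real.sqrt 2 ≠ 0 := ne_of_gt hs2
  have h22 : Real.sqrt 2 * Real.sqrt 2 = 2 := Real.mul_self_sqrt (by norm_num)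
  have hxy : ∑ i, x i * y i = 0 := hortho
  have hsum : ∀ a b e f : ℝ,
      ∑ i, (a * x i + b * y i) * (e * x i + f * y i) = (a * e + b * f) * (c * c) := by
    intro a b e f
    have h : ∀ i, (a * x i + b * y i) * (e * x i + f * y i) =
        (a * e) * (x i * x i) + (a * f + b * e) * (x i * y i) + (b * f) * (y i * y i) :=
      fun i => by ring
    simp only [h, Finset.sum_add_distrib, ← Finset.mul_sum]
    have h1 : ∑ i, x i * x i = x ⬝ᵥ x := rfl
    have h2 : ∑ i, y i * y i = x ⬝ᵥ x := hnorm.symm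
    rw [h1, h2, hxy, hc2]; ring
  have hA0 : ∀ i, A i 0 = x i - t * y i := fun i => by simp [hA_def]
  have hA1 : ∀ i, A i 1 = y i - t * x i := fun i => by simp [hA_def]
  refine ⟨?_, ?_, ?_, ?_, ?_, ?_⟩
  · funext i
    simp only [mulVec, dotProduct, Fin.sum_univ_two, Pi.smul_apply, smul_eq_mul,
      hA0, hA1, Matrix.cons_val_zero, Matrix.cons_val_one, Matrix.head_cons]
    field_simp
    ring
  · funext j
    have e0 : (Aᵀ *ᵥ fun i => (x i - y i) / (Real.sqrt 2 * c)) 0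
        = (1 * (1/(Real.sqrt 2 * c)) + (-t) * (-(1/(Real.sqrt 2 * c)))) * (c * c) := by
      rw [← hsum 1 (-t) (1/(Real.sqrt 2 * c)) (-(1/(Real.sqrt 2 * c)))]
      simp only [mulVec, dotProduct, transpose_apply, hA0]
      exact Finset.sum_congr rfl fun i _ => by ring
    have e1 : (Aᵀ *ᵥ fun i => (x i - y i) / (Real.sqrt 2 * c)) 1
        = ((-t) * (1/(Real.sqrt 2 * c)) + 1 * (-(1/(Real.sqrt 2 * c)))) * (c * c) := by
      rw [← hsum (-t) 1 (1/(Real.sqrt 2 * c)) (-(1/(Real.sqrt 2 * c)))]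
      simp only [mulVec, dotProduct, transpose_apply, hA1]
      exact Finset.sum_congr rfl fun i _ => by ring
    fin_cases j
    · show (Aᵀ *ᵥ fun i => (x i - y i) / (Real.sqrt 2 * c)) 0
        = ((c * (1 + t)) • ![1 / Real.sqrt 2, -(1 / Real.sqrt 2)]) 0
      rw [e0]; simp only [Pi.smul_apply, smul_eq_mul, Matrix.cons_val_zero]
      field_simp
    · show (Aᵀ *ᵥ fun i => (x i - y i) / (Real.sqrt 2 * c)) 1
        = ((c * (1 + t)) • ![1 / Real.sqrt 2, -(1 / Real.sqrt 2)]) 1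
      rw [e1]; simp only [Pi.smul_apply, smul_eq_mul, Matrix.cons_val_one, Matrix.head_cons,
        Matrix.cons_val_zero]
      field_simp
      ring
  · funext i
    simp only [mulVec, dotProduct, Fin.sum_univ_two, Pi.smul_apply, smul_eq_mul,
      hA0, hA1, Matrix.cons_val_zero, Matrix.cons_val_one, Matrix.head_cons]
    field_simp
    ring
  · funext j
    have e0 : (Aᵀ *ᵥ fun i => (x i + y i) / (Real.sqrt 2 * c)) 0
        = (1 * (1/(Real.sqrt 2 * c)) + (-t) * (1/(Real.sqrt 2 * c))) * (c * c) := by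
      rw [← hsum 1 (-t) (1/(Real.sqrt 2 * c)) (1/(Real.sqrt 2 * c))]
      simp only [mulVec, dotProduct, transpose_apply, hA0]
      exact Finset.sum_congr rfl fun i _ => by ring
    have e1 : (Aᵀ *ᵥ fun i => (x i + y i) / (Real.sqrt 2 * c)) 1
        = ((-t) * (1/(Real.sqrt 2 * c)) + 1 * (1/(Real.sqrt 2 * c))) * (c * c) := by
      rw [← hsum (-t) 1 (1/(Real.sqrt 2 * c)) (1/(Real.sqrt 2 * c))]
      simp only [mulVec, dotProduct, transpose_apply, hA1]
      exact Finset.sum_congr rfl fun i _ => by ring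
    fin_cases j
    · show (Aᵀ *ᵥ fun i => (x i + y i) / (Real.sqrt 2 * c)) 0
        = ((c * (1 - t)) • ![1 / Real.sqrt 2, 1 / Real.sqrt 2]) 0
      rw [e0]; simp only [Pi.smul_apply, smul_eq_mul, Matrix.cons_val_zero]
      field_simp
      ring
    · show (Aᵀ *ᵥ fun i => (x i + y i) / (Real.sqrt 2 * c)) 1
        = ((c * (1 - t)) • ![1 / Real.sqrt 2, 1 / Real.sqrt 2]) 1
      rw [e1]; simp only [Pi.smul_apply, smul_eq_mul, Matrix.cons_val_one, Matrix.head_cons,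
        Matrix.cons_val_zero]
      field_simp
      ring
  · -- nuclear norm
    set H : (Aᴴ * A).IsHermitian :=
      (Matrix.posSemidef_conjTranspose_mul_self A).isHermitian with hH_def
    have hM : ∀ j k : Fin 2, (Aᴴ * A) j k = ∑ i, A i j * A i k := by
      intro j k
      simp [Matrix.mul_apply, Matrix.conjTranspose_apply]
    have hM00 : (Aᴴ * A) 0 0 = (1 + t * t) * (c * c) := by
      have h : ∑ i, A i 0 * A i 0 = ((1:ℝ) * 1 + (-t) * (-t)) * (c * c) := by
        rw [← hsum]; exact Finset.sum_congr rfl fun i _ => by rw [hA0 i]; ring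
      rw [hM, h]; ring
    have hM11 : (Aᴴ * A) 1 1 = (1 + t * t) * (c * c) := by
      have h : ∑ i, A i 1 * A i 1 = ((-t) * (-t) + (1:ℝ) * 1) * (c * c) := by
        rw [← hsum]; exact Finset.sum_congr rfl fun i _ => by rw [hA1 i]; ring
      rw [hM, h]; ring
    have hM01 : (Aᴴ * A) 0 1 = -(2 * t) * (c * c) := by
      have h : ∑ i, A i 0 * A i 1 = ((1:ℝ) * (-t) + (-t) * 1) * (c * c) := by
        rw [← hsum]; exact Finset.sum_congr rfl fun i _ => by rw [hA0 i, hA1 i]; ring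
      rw [hM, h]; ring
    have hM10 : (Aᴴ * A) 1 0 = -(2 * t) * (c * c) := by
      have h : ∑ i, A i 1 * A i 0 = ((-t) * 1 + (1:ℝ) * (-t)) * (c * c) := by
        rw [← hsum]; exact Finset.sum_congr rfl fun i _ => by rw [hA0 i, hA1 i]; ring
      rw [hM, h]; ring
    have htr : H.eigenvalues 0 + H.eigenvalues 1 = 2 * (1 + t * t) * (c * c) := by
      have h := trace_eq_sum_eigs H
      rw [Matrix.trace_fin_two, hM00, hM11, Fin.sum_univ_two] at h
      linarith [h]
    have hdet : H.eigenvalues 0 * H.eigenvalues 1 = ((1 - t * t) * (c * c)) ^ 2 := by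
      have h := det_eq_prod_eigs H
      rw [Matrix.det_fin_two, hM00, hM11, hM01, hM10, Fin.prod_univ_two] at h
      rw [← h]; ring
    have h0 : 0 ≤ H.eigenvalues 0 :=
      (Matrix.posSemidef_conjTranspose_mul_self A).eigenvalues_nonneg 0
    have h1 : 0 ≤ H.eigenvalues 1 :=
      (Matrix.posSemidef_conjTranspose_mul_self A).eigenvalues_nonneg 1
    have ht2 : 0 ≤ (1 - t * t) * (c * c) :=
      mul_nonneg (by nlinarith) (by positivity)
    have hsp : Real.sqrt (H.eigenvalues 0) * Real.sqrt (H.eigenvalues 1)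
        = (1 - t * t) * (c * c) := by
      rw [← Real.sqrt_mul h0, hdet, Real.sqrt_sq ht2]
    have hlhs : nuclearNorm A
        = Real.sqrt (H.eigenvalues 0) + Real.sqrt (H.eigenvalues 1) := by
      simp [nuclearNorm, singVals, Fin.sum_univ_two, hH_def]
    rw [hlhs]
    have key : (Real.sqrt (H.eigenvalues 0) + Real.sqrt (H.eigenvalues 1)) ^ 2
        = (2 * c) ^ 2 := by
      rw [add_sq, Real.sq_sqrt h0, Real.sq_sqrt h1]
      linear_combination htr + 2 * hsp
    calc Real.sqrt (H.eigenvalues 0) + Real.sqrt (H.eigenvalues 1)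
        = Real.sqrt ((Real.sqrt (H.eigenvalues 0) + Real.sqrt (H.eigenvalues 1)) ^ 2) :=
          (Real.sqrt_sq (by positivity)).symm
      _ = Real.sqrt ((2 * c) ^ 2) := by rw [key]
      _ = 2 * c := Real.sqrt_sq (by positivity)
  · have hdisj : ∀ i, x i = 0 ∨ y i = 0 := by
      intro i
      exact mul_eq_zero.mp ((Finset.sum_eq_zero_iff_of_nonneg
        (fun i _ => mul_nonneg (hx0 i) (hy0 i))).mp hxy i (Finset.mem_univ i))
    funext i j
    fin_cases j
    · show max (A i 0) 0 = x i
      rw [hA0 i]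
      rcases hdisj i with h | h
      · rw [h, max_eq_right (by nlinarith [mul_nonneg ht0 (hy0 i)])]
      · simp only [h, mul_zero, sub_zero]
        exact max_eq_left (hx0 i)
    · show max (A i 1) 0 = y i
      rw [hA1 i]
      rcases hdisj i with h | h
      · simp only [h, mul_zero, sub_zero]
        exact max_eq_left (hy0 i)
      · rw [h, max_eq_right (by nlinarith [mul_nonneg ht0 (hx0 i)])]
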